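/- In the smooth Feshbach-Schur setting, if H : D(T) → H is boundedly invertible and F_χ(H) : D(T) ∩ V → V is boundedly invertible, then F_χ(H)^{-1} = χ H^{-1} χ + χ̄ T^{-1} χ̄ (as operators on V). -/

import Mathlib

/-- Smooth Feshbach–Schur map, isospectrality (i), second identity: if `H = T + W` is
boundedly invertible with inverse `Hi`, and `F_χ(H)` is boundedly invertible on `V`
with inverse `G` (where `Ran χ ⊆ V`, `T(V ∩ D(T)) ⊆ V` and `χ̄T⁻¹χ̄ V ⊆ V`), then
`F_χ(H)⁻¹ = χ H⁻¹ χ + χ̄ T⁻¹ χ̄` as operators on `V`. -/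
theorem feshbach_inverse_identity_two
    {𝓗 : Type*} [NormedAddCommGroup 𝓗] [InnerProductSpace ℂ 𝓗] [CompleteSpace 𝓗]
    (χ χb T W R Ti Hi G : 𝓗 →L[ℂ] 𝓗) (V : Submodule ℂ 𝓗)
    (hχ0 : χ ≠ 0) (hχb0 : χb ≠ 0)
    (hcomm : χ * χb = χb * χ) (hsum : χ * χ + χb * χb = 1)
    (hTχ : χ * T = T * χ) (hTχb : χb * T = T * χb)
    -- `R = H_χ̄⁻¹` on `Ran χ̄`, where `H_χ̄ = T + χ̄Wχ̄`
    (hRleft : ∀ x : 𝓗, R ((T + χb * W * χb) (χb x)) = χb x)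
    (hRright : ∀ x : 𝓗, (T + χb * W * χb) (R (χb x)) = χb x)
    (hRsupp : χb * R * χb = R)
    -- `Ti = T⁻¹` on `Ran χ̄`
    (hTileft : ∀ x : 𝓗, Ti (T (χb x)) = χb x)
    (hTiright : ∀ x : 𝓗, T (Ti (χb x)) = χb x)
    -- the auxiliary subspace `V`
    (hV : LinearMap.range (χ : 𝓗 →ₗ[ℂ] 𝓗) ≤ V)
    (hTV : ∀ v ∈ V, T v ∈ V)
    (hTiV : ∀ v ∈ V, (χb * Ti * χb) v ∈ V)
    -- `Hi = H⁻¹` where `H = T + W`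
    (hHi₁ : (T + W) * Hi = 1) (hHi₂ : Hi * (T + W) = 1)
    -- `G = F_χ(H)⁻¹` on `V`
    (hGV : ∀ v ∈ V, G v ∈ V)
    (hG₁ : ∀ v ∈ V, (T + χ * W * χ - χ * W * χb * R * χb * W * χ) (G v) = v)
    (hG₂ : ∀ v ∈ V, G ((T + χ * W * χ - χ * W * χb * R * χb * W * χ) v) = v) :
    ∀ v ∈ V, G v = (χ * Hi * χ) v + (χb * Ti * χb) v := by
  -- pointwise versions of the operator hypotheses
  have hsum' : ∀ y : 𝓗, χ (χ y) + χb (χb y) = y := by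
    intro y
    have h := congrArg (fun f : 𝓗 →L[ℂ] 𝓗 => f y) hsum
    simpa using h
  have hcomm' : ∀ y : 𝓗, χ (χb y) = χb (χ y) := by
    intro y
    have h := congrArg (fun f : 𝓗 →L[ℂ] 𝓗 => f y) hcomm
    simpa using h
  have hTχ' : ∀ y : 𝓗, χ (T y) = T (χ y) := by
    intro y
    have h := congrArg (fun f : 𝓗 →L[ℂ] 𝓗 => f y) hTχ
    simpa using h
  have hTχb' : ∀ y : 𝓗, χb (T y) = T (χb y) := by
    intro y
    have h := congrArg (fun f : 𝓗 →L[ℂ] 𝓗 => f y) hTχb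
    simpa using h
  have hHi₂' : ∀ y : 𝓗, Hi (T y + W y) = y := by
    intro y
    have h := congrArg (fun f : 𝓗 →L[ℂ] 𝓗 => f y) hHi₂
    simpa using h
  intro v hv
  have hFG : T (G v) + χ (W (χ (G v))) - χ (W (χb (R (χb (W (χ (G v))))))) = v := by
    have h := hG₁ v hv
    simpa [ContinuousLinearMap.sub_apply, ContinuousLinearMap.add_apply,
      ContinuousLinearMap.mul_apply] using h
  set x := G v with hxdef
  set z := W (χ x) with hz
  set r := R (χb z) with hr
  set Y := z - W (χb r) with hY
  -- T r computed from hRright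
  have hTr : T r = χb z - χb (W (χb r)) := by
    have h := hRright z
    simp only [ContinuousLinearMap.add_apply, ContinuousLinearMap.mul_apply] at h
    rw [← hr] at h
    exact eq_sub_of_add_eq h
  have hFG' : T x + χ Y = v := by
    rw [hY, map_sub, ← hFG]
    abel
  -- χ v = (T + W) (χ x - χb r)
  have hχv : χ v = T (χ x - χb r) + W (χ x - χb r) := by
    have e1 : T (χb r) = χb (χb z) - χb (χb (W (χb r))) := by
      rw [← hTχb' r, hTr, map_sub]
    have e2 : χ (χ z) = z - χb (χb z) := eq_sub_of_add_eq (hsum' z)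
    have e3 : χ (χ (W (χb r))) = W (χb r) - χb (χb (W (χb r))) :=
      eq_sub_of_add_eq (hsum' (W (χb r)))
    calc χ v = χ (T x) + χ (χ Y) := by rw [← hFG', map_add]
    _ = T (χ x) + χ (χ Y) := by rw [hTχ']
    _ = T (χ x - χb r) + W (χ x - χb r) := by
        rw [map_sub T, map_sub W, e1, hY, map_sub χ, map_sub χ, e2, e3, ← hz]
        abel
  have hHiχv : Hi (χ v) = χ x - χb r := by
    rw [hχv]; exact hHi₂' (χ x - χb r)
  have hχbv : χb v = T (χb x) + χb (χ Y) := by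
    rw [← hFG', map_add, hTχb']
  have hTiχbv : Ti (χb v) = χb x + Ti (χb (χ Y)) := by
    rw [hχbv, map_add, hTileft]
  -- key identity: χb (Ti (χb (χ Y))) = χ (χb r)
  have hstar : χb (Ti (χb (χ Y))) = χ (χb r) := by
    have ha : T (χb (Ti (χb (χ Y)))) = χb (χb (χ Y)) := by
      rw [← hTχb', hTiright]
    have hb : T (χb (χ r)) = χb (χb (χ Y)) := by
      calc T (χb (χ r)) = χb (T (χ r)) := (hTχb' (χ r)).symm
      _ = χb (χ (T r)) := by rw [hTχ']
      _ = χb (χ (χb z - χb (W (χb r)))) := by rw [hTr]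
      _ = χb (χb (χ Y)) := by
          congr 1
          rw [map_sub χ, hcomm' z, hcomm' (W (χb r)), ← map_sub χb, ← map_sub χ, hY]
    calc χb (Ti (χb (χ Y))) = Ti (T (χb (Ti (χb (χ Y))))) := (hTileft _).symm
    _ = Ti (T (χb (χ r))) := by rw [ha, hb]
    _ = χb (χ r) := hTileft _
    _ = χ (χb r) := (hcomm' r).symm
  -- conclude
  show x = (χ * Hi * χ) v + (χb * Ti * χb) v
  simp only [ContinuousLinearMap.mul_apply]
  rw [hHiχv, hTiχbv, map_add χb, hstar, map_sub χ]
  calc x = χ (χ x) + χb (χb x) := (hsum' x).symm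
  _ = χ (χ x) - χ (χb r) + (χb (χb x) + χ (χb r)) := by abel
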